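/- In the two-seller sequential-search demand system, the bonus satisfies the identity B_i = (1 − F(A+Δp))·(1 − F(A−Δp)) + ∫_{A−Δp}^{A} (F(u) − F(A−Δp))·f(u+Δp) du, and consequently B_i ≥ 0. Moreover, if in addition f > 0 on the open interval (0,1) and A < 1, then B_i > 0. -/

import Mathlib

open MeasureTheory

/-- The CDF associated to density `f` supported on `[0,1]`. -/
noncomputable def cdf (f : ℝ → ℝ) (x : ℝ) : ℝ := ∫ u in (0:ℝ)..x, f u

/-- Seller i's bonus `B_i = D_i¹ - D_i²` in the two-seller sequential-search
demand system with reservation value `A` and prices `pi, pj`. -/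
noncomputable def bonusI (f : ℝ → ℝ) (A pi pj : ℝ) : ℝ :=
  (1 - cdf f (A + (pi - pj)) + ∫ u in pj..A, cdf f u * f (u + (pi - pj)))
    - ((1 - cdf f A) * cdf f (A - (pi - pj))
        + ∫ u in pj..(A - (pi - pj)), cdf f u * f (u + (pi - pj)))

/-- The bonus identity
`B_i = (1-F(A+Δp))(1-F(A-Δp)) + ∫_{A-Δp}^{A} (F(u)-F(A-Δp)) f(u+Δp) du`;
consequently `B_i ≥ 0`, and `B_i > 0` if moreover `f > 0` on `(0,1)` and `A < 1`. -/
theorem bonus_identity_nonneg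
    (f : ℝ → ℝ) (hf_cont : Continuous f) (hf_nonneg : ∀ x, 0 ≤ f x)
    (hf_supp : ∀ x, x < 0 ∨ 1 < x → f x = 0)
    (hf_total : (∫ u in (0:ℝ)..1, f u) = 1)
    (A pi pj : ℝ) (hpi : 0 ≤ pi) (hpj : 0 ≤ pj)
    (hpiA : pi ≤ A) (hpjA : pj ≤ A) (hA1 : A ≤ 1)
    (hgap : |pi - pj| ≤ 1 - A) :
    bonusI f A pi pj
        = (1 - cdf f (A + (pi - pj))) * (1 - cdf f (A - (pi - pj)))
          + ∫ u in (A - (pi - pj))..A,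
              (cdf f u - cdf f (A - (pi - pj))) * f (u + (pi - pj))
      ∧ 0 ≤ bonusI f A pi pj
      ∧ ((∀ x, 0 < x → x < 1 → 0 < f x) → A < 1 → 0 < bonusI f A pi pj) := by
  set d : ℝ := pi - pj with hd
  set F : ℝ → ℝ := cdf f with hFdef
  -- basic facts
  have hfi : ∀ a b : ℝ, IntervalIntegrable f volume a b :=
    fun a b => hf_cont.intervalIntegrable a b
  have hFsub : ∀ a b : ℝ, F b - F a = ∫ u in a..b, f u := by
    intro a b
    simp only [hFdef, cdf]
    exact intervalIntegral.integral_interval_sub_left (hfi 0 b) (hfi 0 a)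
  have hFmono : Monotone F := by
    intro a b hab
    have h := intervalIntegral.integral_nonneg (μ := volume) hab (fun u _ => hf_nonneg u)
    have := hFsub a b
    linarith
  have hF1 : F 1 = 1 := by
    show cdf f 1 = 1
    simpa [cdf] using hf_total
  have hFle1 : ∀ x : ℝ, x ≤ 1 → F x ≤ 1 := by
    intro x hx
    calc F x ≤ F 1 := hFmono hx
    _ = 1 := hF1
  have hFcont : Continuous F := intervalIntegral.continuous_primitive hfi 0
  have hgcont : Continuous (fun u => F u * f (u + d)) :=
    hFcont.mul (hf_cont.comp (continuous_id.add continuous_const))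
  have hgi : ∀ a b : ℝ, IntervalIntegrable (fun u => F u * f (u + d)) volume a b :=
    fun a b => hgcont.intervalIntegrable a b
  have hfci : ∀ a b : ℝ, IntervalIntegrable (fun u => f (u + d)) volume a b :=
    fun a b => (hf_cont.comp (continuous_id.add continuous_const)).intervalIntegrable a b
  -- bounds from the gap hypothesis
  have hd1 : A + d ≤ 1 := by
    have := le_abs_self d; simp only [hd] at *; linarith
  have hd2 : A - d ≤ 1 := by
    have := neg_abs_le d; simp only [hd] at *; linarith
  -- splitting of the integral
  have hsplit : (∫ u in pj..A, F u * f (u + d))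
      = (∫ u in pj..(A - d), F u * f (u + d)) + ∫ u in (A - d)..A, F u * f (u + d) :=
    (intervalIntegral.integral_add_adjacent_intervals (hgi pj (A - d)) (hgi (A - d) A)).symm
  -- translation
  have htrans : (∫ u in (A - d)..A, f (u + d)) = F (A + d) - F A := by
    rw [intervalIntegral.integral_comp_add_right f d, show A - d + d = A by ring,
      ← hFsub A (A + d)]
  -- the key integral rewriting
  have hint2 : (∫ u in (A - d)..A, (F u - F (A - d)) * f (u + d))
      = (∫ u in (A - d)..A, F u * f (u + d)) - F (A - d) * (F (A + d) - F A) := by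
    have hci2 : IntervalIntegrable (fun u : ℝ => F (A - d) * f (u + d)) volume (A - d) A :=
      Continuous.intervalIntegrable (by fun_prop) _ _
    rw [← htrans, ← intervalIntegral.integral_const_mul]
    rw [← intervalIntegral.integral_sub (hgi (A - d) A) hci2]
    congr 1
    funext u
    ring
  -- the identity
  have hId : bonusI f A pi pj
      = (1 - F (A + d)) * (1 - F (A - d))
        + ∫ u in (A - d)..A, (F u - F (A - d)) * f (u + d) := by
    simp only [bonusI, ← hd, ← hFdef]
    rw [hsplit, hint2]
    ring
  -- nonnegativity of the two terms
  have hprod : 0 ≤ (1 - F (A + d)) * (1 - F (A - d)) :=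
    mul_nonneg (by have := hFle1 _ hd1; linarith) (by have := hFle1 _ hd2; linarith)
  have hIntNonneg : 0 ≤ ∫ u in (A - d)..A, (F u - F (A - d)) * f (u + d) := by
    rcases le_total d 0 with h | h
    · rw [intervalIntegral.integral_symm]
      have hle : A ≤ A - d := by linarith
      have hnp : (∫ u in A..(A - d), (F u - F (A - d)) * f (u + d)) ≤ 0 := by
        have : (∫ u in A..(A - d), (F u - F (A - d)) * f (u + d))
            = -∫ u in A..(A - d), (F (A - d) - F u) * f (u + d) := by
          rw [← intervalIntegral.integral_neg]
          congr 1; funext u; ring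
        rw [this, neg_nonpos]
        apply intervalIntegral.integral_nonneg hle
        intro u hu
        exact mul_nonneg (by have := hFmono hu.2; linarith) (hf_nonneg _)
      linarith
    · apply intervalIntegral.integral_nonneg (by linarith : A - d ≤ A)
      intro u hu
      exact mul_nonneg (by have := hFmono hu.1; linarith) (hf_nonneg _)
  refine ⟨hId, by rw [hId]; linarith, ?_⟩
  -- positivity
  intro hfpos hA1'
  have hdA : d ≤ A := by simp only [hd]; linarith
  have hdA' : -A ≤ d := by simp only [hd]; linarith
  have Fstrict : ∀ a b : ℝ, a < b → 0 < b → b ≤ 1 → F a < F b := by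
    intro a b hab hb0 hb1
    have hFa : F a ≤ F (max a 0) := hFmono (le_max_left a 0)
    have hpos : 0 < ∫ u in (max a 0)..b, f u := by
      apply intervalIntegral.intervalIntegral_pos_of_pos_on (hfi _ _)
      · intro x hx
        exact hfpos x (lt_of_le_of_lt (le_max_right a 0) hx.1) (lt_of_lt_of_le hx.2 hb1)
      · exact max_lt hab hb0
    have := hFsub (max a 0) b
    linarith
  rw [hId]
  rcases lt_or_ge (|d|) (1 - A) with hlt | hge
  · -- both CDF values strictly below 1: product is positive
    have h1 : A + d < 1 := by have := le_abs_self d; linarith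
    have h2 : A - d < 1 := by have := neg_abs_le d; linarith
    have hp1 : F (A + d) < 1 := by have := Fstrict (A + d) 1 h1 one_pos le_rfl; linarith [hF1]
    have hp2 : F (A - d) < 1 := by have := Fstrict (A - d) 1 h2 one_pos le_rfl; linarith [hF1]
    have := mul_pos (by linarith : (0:ℝ) < 1 - F (A + d)) (by linarith : (0:ℝ) < 1 - F (A - d))
    linarith
  · -- |d| = 1 - A
    have habs : |d| = 1 - A := le_antisymm (by simpa [← hd] using hgap) hge
    rcases (abs_eq (by linarith : (0:ℝ) ≤ 1 - A)).mp habs with hcase | hcase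
    · -- d = 1 - A > 0
      have hdpos : 0 < d := by linarith
      have hAhalf : (1:ℝ)/2 ≤ A := by linarith
      set c : ℝ := max (A - d) 0 with hc
      have hcA : c < A := max_lt (by linarith) (by linarith)
      have hgcont2 : Continuous (fun u => (F u - F (A - d)) * f (u + d)) :=
        (hFcont.sub continuous_const).mul (hf_cont.comp (continuous_id.add continuous_const))
      have hsplit3 : (∫ u in (A - d)..A, (F u - F (A - d)) * f (u + d))
          = (∫ u in (A - d)..c, (F u - F (A - d)) * f (u + d))
            + ∫ u in c..A, (F u - F (A - d)) * f (u + d) :=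
        (intervalIntegral.integral_add_adjacent_intervals
          (hgcont2.intervalIntegrable _ _) (hgcont2.intervalIntegrable _ _)).symm
      have hI1 : 0 ≤ ∫ u in (A - d)..c, (F u - F (A - d)) * f (u + d) := by
        apply intervalIntegral.integral_nonneg (le_max_left _ _)
        intro u hu
        exact mul_nonneg (by have := hFmono hu.1; linarith) (hf_nonneg _)
      have hI2 : 0 < ∫ u in c..A, (F u - F (A - d)) * f (u + d) := by
        apply intervalIntegral.intervalIntegral_pos_of_pos_on
          (hgcont2.intervalIntegrable _ _) _ hcA
        intro u hu
        have hu1 : A - d < u := lt_of_le_of_lt (le_max_left _ _) hu.1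
        have hu0 : 0 < u := lt_of_le_of_lt (le_max_right _ _) hu.1
        have hFu : F (A - d) < F u := Fstrict (A - d) u hu1 hu0 (by linarith [hu.2])
        have hfu : 0 < f (u + d) := hfpos _ (by linarith) (by have := hu.2; linarith)
        exact mul_pos (by linarith) hfu
      nlinarith [hprod]
    · -- d = -(1 - A), so A - d = 1
      have hAd1 : A - d = 1 := by linarith
      have key : 0 < ∫ u in (A - d)..A, (F u - F (A - d)) * f (u + d) := by
        rw [hAd1, hF1, intervalIntegral.integral_symm]
        have hrw : (∫ u in A..1, (F u - 1) * f (u + d))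
            = -∫ u in A..1, (1 - F u) * f (u + d) := by
          rw [← intervalIntegral.integral_neg]
          congr 1; funext u; ring
        rw [hrw, neg_neg]
        apply intervalIntegral.intervalIntegral_pos_of_pos_on
          (((continuous_const.sub hFcont).mul
            (hf_cont.comp (continuous_id.add continuous_const))).intervalIntegrable _ _)
          _ hA1'
        intro u hu
        have hFu : F u < 1 := by have := Fstrict u 1 hu.2 one_pos le_rfl; linarith [hF1]
        have hfu : 0 < f (u + d) := by
          apply hfpos
          · have := hu.1; linarith
          · have := hu.2; linarith
        exact mul_pos (by show (0:ℝ) < 1 - F u; linarith) hfu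
      linarith
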